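/- Let k be a field of characteristic p, where p ≥ 3 is a prime, L a Lie algebra over k, M a k-vector space, and φ : L → End_k(M) a k-linear Lie algebra homomorphism. Fix x ∈ L and v ∈ M, and suppose there exists x' ∈ L such that [x', z] = (ad x)^p(z) for all z ∈ L and φ(x') = φ(x)^p. Define for y ∈ L, w ∈ M the sequences y_0 = y, m_0 = w, y_{n+1} = [x, y_n], m_{n+1} = φ(x)(m_n) − φ(y_n)(v). Then for all y ∈ L and w ∈ M: y_p = [x', y] and m_p = φ(x')(w) − φ(y)( φ(x)^{p-1}(v) ). In other words, ad_{(x,v)}^p = ad_{(x', φ(x)^{p-1}(v))} on the semidirect product L ⋉ M. -/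

import Mathlib

open Finset in
lemma auxA' {R : Type*} [Ring R] (X Z : R) (h : Commute X Z) (n : ℕ) :
    (X + Z) ^ n = ∑ j ∈ range (n + 1), (n.choose j) • (X ^ (n - j) * Z ^ j) := by
  rw [h.add_pow, ← Finset.sum_range_reflect]
  refine Finset.sum_congr rfl fun j hj => ?_
  have hj' : j ≤ n := Nat.lt_succ_iff.mp (Finset.mem_range.mp hj)
  simp only [Nat.add_sub_cancel]
  rw [Nat.choose_symm hj', Nat.sub_sub_self hj', nsmul_eq_mul']

open Finset in
lemma auxS' {R : Type*} [Ring R] (X Z : R) (h : Commute X Z) (n : ℕ) :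
    ∑ i ∈ range n, X ^ (n - 1 - i) * (X + Z) ^ i
      = ∑ j ∈ range n, (n.choose (j + 1)) • (X ^ (n - 1 - j) * Z ^ j) := by
  induction n with
  | zero => simp
  | succ n ih =>
    have hL : ∑ i ∈ range (n + 1), X ^ (n + 1 - 1 - i) * (X + Z) ^ i
        = X * (∑ i ∈ range n, X ^ (n - 1 - i) * (X + Z) ^ i) + (X + Z) ^ n := by
      rw [Finset.sum_range_succ, Finset.mul_sum]
      congr 1
      · refine Finset.sum_congr rfl fun i hi => ?_
        have hi' : i < n := Finset.mem_range.mp hi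
        have : n + 1 - 1 - i = (n - 1 - i) + 1 := by omega
        rw [this, pow_succ', mul_assoc]
      · simp
    have hR : ∑ j ∈ range (n + 1), ((n + 1).choose (j + 1)) • (X ^ (n + 1 - 1 - j) * Z ^ j)
        = X * (∑ j ∈ range n, (n.choose (j + 1)) • (X ^ (n - 1 - j) * Z ^ j)) + (X + Z) ^ n := by
      simp only [Nat.choose_succ_succ, add_smul, Finset.sum_add_distrib, Nat.add_sub_cancel]
      rw [auxA' X Z h n, add_comm]
      congr 1
      rw [Finset.sum_range_succ, Nat.choose_succ_self, zero_smul, add_zero, Finset.mul_sum]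
      refine Finset.sum_congr rfl fun j hj => ?_
      have hj' : j < n := Finset.mem_range.mp hj
      have : n - j = (n - 1 - j) + 1 := by omega
      rw [this, pow_succ', mul_assoc, mul_smul_comm]
    rw [hL, hR, ih]

lemma auxKey' {k : Type*} [Field k] {p : ℕ} (hp : p.Prime) (hp3 : 3 ≤ p) [CharP k p]
    {R : Type*} [Ring R] [Algebra k R] (X Y : R) (h : Commute X Y) :
    ∑ i ∈ Finset.range p, X ^ (p - 1 - i) * (X - Y) ^ i = Y ^ (p - 1) := by
  have h' : Commute X (-Y) := h.neg_right
  have hs := auxS' _ _ h' p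
  rw [← sub_eq_add_neg] at hs
  rw [hs, Finset.sum_eq_single (p - 1)]
  · have h1 : p - 1 + 1 = p := Nat.succ_pred_eq_of_pos hp.pos
    rw [h1, Nat.choose_self, one_smul, Nat.sub_self, pow_zero, one_mul]
    have hev : Even (p - 1) := Nat.Odd.sub_odd (hp.odd_of_ne_two (by omega)) odd_one
    exact hev.neg_pow _
  · intro j hj hne
    have hj' : j < p := Finset.mem_range.mp hj
    have hdvd : p ∣ p.choose (j + 1) := hp.dvd_choose_self (by omega) (by omega)
    have hz : ((p.choose (j + 1) : k)) = 0 := (CharP.cast_eq_zero_iff k p _).mpr hdvd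
    rw [← Nat.cast_smul_eq_nsmul k, hz, zero_smul]
  · intro h'
    exact absurd (Finset.mem_range.mpr (by omega)) h'

attribute [local instance 100] LieRing.ofAssociativeRing

/-- Key computation for the restricted semidirect product: if `x' ∈ L` satisfies
`⁅x', z⁆ = (ad x)^p z` for all `z` and `φ x' = φ(x)^p`, then the `p`-th iterated
adjoint action of `(x, v)` on `L ⋉ M` is given by `y_p = ⁅x', y⁆` and
`m_p = φ(x') w − φ(y) (φ(x)^{p-1} v)`, i.e. `ad_{(x,v)}^p = ad_{(x', φ(x)^{p-1} v)}`. -/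
theorem stmt4 {k : Type*} [Field k] {p : ℕ} (hp : p.Prime) (hp3 : 3 ≤ p) [CharP k p]
    {L : Type*} [LieRing L] [LieAlgebra k L]
    {M : Type*} [AddCommGroup M] [Module k M]
    (φ : L →ₗ⁅k⁆ Module.End k M)
    (x : L) (v : M) (x' : L)
    (hx' : ∀ z : L, ⁅x', z⁆ = (LieAlgebra.ad k L x ^ p) z)
    (hφx' : φ x' = φ x ^ p) :
    ∀ (y : L) (w : M) (ys : ℕ → L) (ms : ℕ → M),
      ys 0 = y → ms 0 = w →
      (∀ n, ys (n + 1) = ⁅x, ys n⁆) →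
      (∀ n, ms (n + 1) = φ x (ms n) - φ (ys n) v) →
      ys p = ⁅x', y⁆ ∧ ms p = φ x' w - φ y ((φ x ^ (p - 1)) v) := by
  intro y w ys ms hy0 hm0 hys hms
  have hysn : ∀ n, ys n = ((LieAlgebra.ad k L x) ^ n) y := by
    intro n
    induction n with
    | zero => simpa using hy0
    | succ n ih => rw [hys n, ih, pow_succ', Module.End.mul_apply, LieAlgebra.ad_apply]
  have hφys : ∀ n, φ (ys n) =
      ((LinearMap.mulLeft k (φ x) - LinearMap.mulRight k (φ x)) ^ n) (φ y) := by
    intro n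
    induction n with
    | zero => simpa using congrArg φ hy0
    | succ n ih =>
      rw [hys n, LieHom.map_lie, ih, pow_succ', Module.End.mul_apply]
      rw [Ring.lie_def, LinearMap.sub_apply, LinearMap.mulLeft_apply, LinearMap.mulRight_apply]
  have hmsn : ∀ n, ms n = ((φ x) ^ n) w
      - ∑ i ∈ Finset.range n, ((φ x) ^ (n - 1 - i)) (φ (ys i) v) := by
    intro n
    induction n with
    | zero => simpa using hm0
    | succ n ih =>
      rw [hms n, ih, map_sub, map_sum, Finset.sum_range_succ]
      have h1 : (φ x) (((φ x) ^ n) w) = ((φ x) ^ (n + 1)) w := by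
        rw [pow_succ', Module.End.mul_apply]
      have h2 : ∀ i ∈ Finset.range n,
          (φ x) (((φ x) ^ (n - 1 - i)) (φ (ys i) v)) = ((φ x) ^ (n + 1 - 1 - i)) (φ (ys i) v) := by
        intro i hi
        have hi' : i < n := Finset.mem_range.mp hi
        have : n + 1 - 1 - i = (n - 1 - i) + 1 := by omega
        rw [this, pow_succ', Module.End.mul_apply]
      have h3 : ((φ x) ^ (n + 1 - 1 - n)) (φ (ys n) v) = φ (ys n) v := by
        simp
      rw [h1, Finset.sum_congr rfl h2, h3, sub_sub]
  refine ⟨by rw [hysn p, ← hx' y], ?_⟩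
  have hsum : ∑ i ∈ Finset.range p, ((φ x) ^ (p - 1 - i)) (φ (ys i) v)
      = (φ y) (((φ x) ^ (p - 1)) v) := by
    have e1 : ∀ i ∈ Finset.range p, ((φ x) ^ (p - 1 - i)) (φ (ys i) v)
        = ((((LinearMap.mulLeft k (φ x)) ^ (p - 1 - i) *
            (LinearMap.mulLeft k (φ x) - LinearMap.mulRight k (φ x)) ^ i) (φ y)) : Module.End k M) v := by
      intro i _
      rw [hφys i, Module.End.mul_apply, LinearMap.pow_mulLeft, LinearMap.mulLeft_apply,
        Module.End.mul_apply]
    rw [Finset.sum_congr rfl e1, ← LinearMap.sum_apply, ← LinearMap.sum_apply,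
      auxKey' (k := k) hp hp3 (R := Module.End k (Module.End k M)) _ _ (LinearMap.commute_mulLeft_right (φ x) (φ x)), LinearMap.pow_mulRight, LinearMap.mulRight_apply,
      Module.End.mul_apply]
  rw [hmsn p, hφx', hsum]
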